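/- Let R ∈ ℝ and let q₀, q₁ : [R,∞) → ℝ be continuous with q₀(ζ) ≥ 1/4 and q₁(ζ) ≥ 0 for all ζ ≥ R, and ∫_R^∞ s q₁(s) ds < ∞. Let ψ₀, ψ₁ : [R,∞) → (0,∞) be C² solutions of ψ₀'' = q₀ ψ₀ and ψ₁'' = (q₀ + q₁) ψ₁ respectively, both tending to 0 as ζ → +∞. Then the ratio ψ₁(ζ)/ψ₀(ζ) converges as ζ → +∞ to a finite positive limit c ∈ (0,∞). -/

import Mathlib

open Real Filter MeasureTheory

open Set in
private lemma auxDiff (ψ : ℝ → ℝ) (h : ContDiff ℝ 2 ψ) :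
    Differentiable ℝ ψ ∧ Differentiable ℝ (deriv ψ) ∧ Continuous (deriv ψ) := by
  have h1 : ContDiff ℝ 1 (deriv ψ) := by
    have h2 : ContDiff ℝ ((1:ℕ) + 1) ψ := by exact_mod_cast h
    exact (contDiff_succ_iff_deriv.mp h2).2.2
  exact ⟨h.differentiable (by norm_num), h1.differentiable (by norm_num), h1.continuous⟩

section PsiFacts
open Set
variable (R : ℝ) (q ψ : ℝ → ℝ) (hreg : ContDiff ℝ 2 ψ)
  (hq : ∀ ζ ≥ R, 0 ≤ q ζ) (hpos : ∀ ζ ≥ R, 0 < ψ ζ)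
  (hode : ∀ ζ ≥ R, deriv (deriv ψ) ζ = q ζ * ψ ζ)
  (hlim : Tendsto ψ atTop (nhds 0))

include hreg hq hpos hode in
private lemma psi_deriv_mono : MonotoneOn (deriv ψ) (Ici R) := by
  obtain ⟨hd, hd2, hdc⟩ := auxDiff ψ hreg
  apply monotoneOn_of_deriv_nonneg (convex_Ici R) hdc.continuousOn
    (hd2.differentiableOn.mono interior_subset)
  intro x hx
  rw [interior_Ici] at hx
  rw [hode x (le_of_lt hx)]
  exact mul_nonneg (hq x (le_of_lt hx)) (hpos x (le_of_lt hx)).le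

include hreg hq hpos hode hlim in
private lemma psi_deriv_nonpos : ∀ ζ ≥ R, deriv ψ ζ ≤ 0 := by
  obtain ⟨hd, hd2, hdc⟩ := auxDiff ψ hreg
  have hmono := psi_deriv_mono R q ψ hreg hq hpos hode
  intro a ha
  by_contra hcon
  push_neg at hcon
  have hev : ∀ᶠ ζ in atTop, ψ ζ < ψ a := hlim.eventually_lt_const (hpos a ha)
  obtain ⟨ζ, hζ1, hζ2⟩ := ((hev.and (eventually_gt_atTop a)).exists)
  obtain ⟨ξ, hξmem, hξ⟩ := exists_hasDerivAt_eq_slope ψ (deriv ψ) hζ2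
    hd.continuous.continuousOn (fun x _ => hd.differentiableAt.hasDerivAt)
  have h1 : deriv ψ a ≤ deriv ψ ξ :=
    hmono (mem_Ici.mpr ha) (mem_Ici.mpr (le_trans ha (le_of_lt hξmem.1)))
      (le_of_lt hξmem.1)
  have h2 : (0:ℝ) < (ψ ζ - ψ a) / (ζ - a) := lt_of_lt_of_le hcon (hξ ▸ h1)
  have h3 : ψ ζ - ψ a < 0 := by linarith
  have h4 : 0 < ψ ζ - ψ a := by
    have := mul_pos h2 (sub_pos.mpr hζ2)
    rwa [div_mul_cancel₀ _ (by linarith : ζ - a ≠ 0)] at this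
  linarith

include hreg hq hpos hode hlim in
private lemma psi_antitone : AntitoneOn ψ (Ici R) := by
  obtain ⟨hd, hd2, hdc⟩ := auxDiff ψ hreg
  have hnp := psi_deriv_nonpos R q ψ hreg hq hpos hode hlim
  apply antitoneOn_of_deriv_nonpos (convex_Ici R) hd.continuous.continuousOn
    (hd.differentiableOn.mono interior_subset)
  intro x hx
  rw [interior_Ici] at hx
  exact hnp x (le_of_lt hx)

include hreg hq hpos hode hlim in
private lemma psi_deriv_tendsto : Tendsto (deriv ψ) atTop (nhds 0) := by
  obtain ⟨hd, hd2, hdc⟩ := auxDiff ψ hreg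
  have hmono := psi_deriv_mono R q ψ hreg hq hpos hode
  have hnp := psi_deriv_nonpos R q ψ hreg hq hpos hode hlim
  have hlb : ∀ ζ ≥ R + 1, ψ ζ - ψ (ζ - 1) ≤ deriv ψ ζ := by
    intro ζ hζ
    have hlt : ζ - 1 < ζ := by linarith
    obtain ⟨ξ, hξmem, hξ⟩ := exists_hasDerivAt_eq_slope ψ (deriv ψ) hlt
      hd.continuous.continuousOn (fun x _ => hd.differentiableAt.hasDerivAt)
    have hR1 : R ≤ ζ - 1 := by linarith
    have h1 : deriv ψ ξ ≤ deriv ψ ζ :=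
      hmono (mem_Ici.mpr (le_trans hR1 hξmem.1.le)) (mem_Ici.mpr (by linarith))
        hξmem.2.le
    have heq : (ψ ζ - ψ (ζ - 1)) / (ζ - (ζ - 1)) = ψ ζ - ψ (ζ - 1) := by
      norm_num
    rw [hξ, heq] at h1
    exact h1
  have hlbtend : Tendsto (fun ζ => ψ ζ - ψ (ζ - 1)) atTop (nhds 0) := by
    have h2 : Tendsto (fun ζ : ℝ => ψ (ζ - 1)) atTop (nhds 0) :=
      hlim.comp (tendsto_atTop_add_const_right atTop (-1) tendsto_id)
    simpa using hlim.sub h2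
  apply tendsto_of_tendsto_of_tendsto_of_le_of_le' hlbtend tendsto_const_nhds
  · filter_upwards [eventually_ge_atTop (R + 1)] with ζ hζ using hlb ζ hζ
  · filter_upwards [eventually_ge_atTop R] with ζ hζ using hnp ζ hζ

end PsiFacts

open Set in
private lemma q1_integrable (R : ℝ) (q₁ : ℝ → ℝ) (hq₁cont : ContinuousOn q₁ (Set.Ici R))
    (hq₁ : ∀ ζ ≥ R, 0 ≤ q₁ ζ)
    (hq₁int : IntegrableOn (fun s => s * q₁ s) (Set.Ici R)) :
    IntegrableOn q₁ (Set.Ici R) := by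
  set M := max R 1 with hM
  have hRM : R ≤ M := le_max_left _ _
  have h1 : IntegrableOn q₁ (Icc R M) :=
    (hq₁cont.mono Icc_subset_Ici_self).integrableOn_Icc
  have h2 : IntegrableOn q₁ (Ioi M) := by
    apply Integrable.mono (hq₁int.mono_set (Ioi_subset_Ici (le_max_left R 1)))
    · exact (hq₁cont.mono (Ioi_subset_Ici hRM)).aestronglyMeasurable measurableSet_Ioi
    · rw [ae_restrict_iff' measurableSet_Ioi]
      filter_upwards with s hs
      have hs1 : 1 ≤ s := le_trans (le_max_right R 1) hs.le
      have hq : 0 ≤ q₁ s := hq₁ s (le_trans hRM hs.le)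
      rw [Real.norm_eq_abs, Real.norm_eq_abs, abs_of_nonneg hq,
        abs_of_nonneg (mul_nonneg (by linarith) hq)]
      nlinarith
  have hsub : Set.Ici R ⊆ Icc R M ∪ Ioi M := by
    intro x hx
    rcases le_or_gt x M with h | h
    · exact Or.inl ⟨hx, h⟩
    · exact Or.inr h
  exact (h1.union h2).mono_set hsub

open Set in
private lemma tail_tendsto (R : ℝ) (f : ℝ → ℝ) (hf : IntegrableOn f (Set.Ioi R)) :
    Tendsto (fun a => ∫ s in Set.Ioi a, f s) atTop (nhds 0) := by
  have key : ∀ a ≥ R, (∫ s in Set.Ioi a, f s)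
      = (∫ s in Set.Ioi R, f s) - ∫ s in R..a, f s := by
    intro a ha
    rw [intervalIntegral.integral_of_le ha]
    have hsplit : (∫ s in Set.Ioi R, f s)
        = (∫ s in Set.Ioc R a, f s) + ∫ s in Set.Ioi a, f s := by
      rw [← setIntegral_union (Set.Ioc_disjoint_Ioi le_rfl) measurableSet_Ioi
        (hf.mono_set Set.Ioc_subset_Ioi_self) (hf.mono_set (Set.Ioi_subset_Ioi ha)),
        Set.Ioc_union_Ioi_eq_Ioi ha]
    linarith
  have h1 : Tendsto (fun a => (∫ s in Set.Ioi R, f s) - ∫ s in R..a, f s) atTop (nhds 0) := by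
    have := intervalIntegral_tendsto_integral_Ioi R hf tendsto_id
    simpa using (tendsto_const_nhds (x := ∫ s in Set.Ioi R, f s)).sub this
  apply h1.congr'
  filter_upwards [eventually_ge_atTop R] with a ha
  exact (key a ha).symm

set_option maxHeartbeats 1000000 in
open Set in
/-- Comparison lemma for Schrödinger-type equations: if `ψ₀'' = q₀ ψ₀` and
`ψ₁'' = (q₀ + q₁) ψ₁` on `[R,∞)` with `q₀ ≥ 1/4`, `q₁ ≥ 0`, `∫_R^∞ s q₁(s) ds < ∞`,
and both `ψ₀, ψ₁` are positive and tend to `0` at `+∞`, then `ψ₁/ψ₀` tends to a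
finite positive limit. -/
theorem schroedinger_comparison (R : ℝ) (q₀ q₁ : ℝ → ℝ)
    (hq₀cont : ContinuousOn q₀ (Set.Ici R))
    (hq₁cont : ContinuousOn q₁ (Set.Ici R))
    (hq₀ : ∀ ζ ≥ R, 1 / 4 ≤ q₀ ζ)
    (hq₁ : ∀ ζ ≥ R, 0 ≤ q₁ ζ)
    (hq₁int : IntegrableOn (fun s => s * q₁ s) (Set.Ici R))
    (ψ₀ ψ₁ : ℝ → ℝ)
    (hψ₀reg : ContDiff ℝ 2 ψ₀) (hψ₁reg : ContDiff ℝ 2 ψ₁)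
    (hψ₀pos : ∀ ζ ≥ R, 0 < ψ₀ ζ) (hψ₁pos : ∀ ζ ≥ R, 0 < ψ₁ ζ)
    (hψ₀ode : ∀ ζ ≥ R, deriv (deriv ψ₀) ζ = q₀ ζ * ψ₀ ζ)
    (hψ₁ode : ∀ ζ ≥ R, deriv (deriv ψ₁) ζ = (q₀ ζ + q₁ ζ) * ψ₁ ζ)
    (hψ₀lim : Tendsto ψ₀ atTop (nhds 0))
    (hψ₁lim : Tendsto ψ₁ atTop (nhds 0)) :
    ∃ c : ℝ, 0 < c ∧ Tendsto (fun ζ => ψ₁ ζ / ψ₀ ζ) atTop (nhds c) := by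
  obtain ⟨hd₀, hd₀2, hd₀c⟩ := auxDiff ψ₀ hψ₀reg
  obtain ⟨hd₁, hd₁2, hd₁c⟩ := auxDiff ψ₁ hψ₁reg
  have hq₀' : ∀ ζ ≥ R, 0 ≤ q₀ ζ := fun ζ hζ => le_trans (by norm_num) (hq₀ ζ hζ)
  have hq01 : ∀ ζ ≥ R, 0 ≤ q₀ ζ + q₁ ζ := fun ζ hζ =>
    add_nonneg (hq₀' ζ hζ) (hq₁ ζ hζ)
  have hψ₀anti := psi_antitone R q₀ ψ₀ hψ₀reg hq₀' hψ₀pos hψ₀ode hψ₀lim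
  have hψ₁anti := psi_antitone R (fun ζ => q₀ ζ + q₁ ζ) ψ₁ hψ₁reg hq01 hψ₁pos hψ₁ode hψ₁lim
  have hd₀lim := psi_deriv_tendsto R q₀ ψ₀ hψ₀reg hq₀' hψ₀pos hψ₀ode hψ₀lim
  have hd₁lim := psi_deriv_tendsto R (fun ζ => q₀ ζ + q₁ ζ) ψ₁ hψ₁reg hq01 hψ₁pos hψ₁ode hψ₁lim
  -- The Wronskian
  set W : ℝ → ℝ := fun u => deriv ψ₁ u * ψ₀ u - ψ₁ u * deriv ψ₀ u with hWdef
  have hWder : ∀ u ≥ R, HasDerivAt W (q₁ u * (ψ₀ u * ψ₁ u)) u := by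
    intro u hu
    have h1 : HasDerivAt (fun v => deriv ψ₁ v * ψ₀ v)
        (deriv (deriv ψ₁) u * ψ₀ u + deriv ψ₁ u * deriv ψ₀ u) u :=
      (hd₁2.differentiableAt.hasDerivAt).mul (hd₀.differentiableAt.hasDerivAt)
    have h2 : HasDerivAt (fun v => ψ₁ v * deriv ψ₀ v)
        (deriv ψ₁ u * deriv ψ₀ u + ψ₁ u * deriv (deriv ψ₀) u) u :=
      (hd₁.differentiableAt.hasDerivAt).mul (hd₀2.differentiableAt.hasDerivAt)
    have h3 := h1.sub h2
    exact h3.congr_deriv (by rw [hψ₀ode u hu, hψ₁ode u hu]; ring)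
  have hWcont : Continuous W := (hd₁c.mul hd₀.continuous).sub (hd₁.continuous.mul hd₀c)
  have hWmono : MonotoneOn W (Ici R) := by
    apply monotoneOn_of_deriv_nonneg (convex_Ici R) hWcont.continuousOn
    · intro x hx
      rw [interior_Ici] at hx
      exact ((hWder x hx.le).differentiableAt).differentiableWithinAt
    · intro x hx
      rw [interior_Ici] at hx
      rw [(hWder x hx.le).deriv]
      exact mul_nonneg (hq₁ x hx.le) (mul_nonneg (hψ₀pos x hx.le).le (hψ₁pos x hx.le).le)
  have hWlim : Tendsto W atTop (nhds 0) := by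
    have := (hd₁lim.mul hψ₀lim).sub (hψ₁lim.mul hd₀lim)
    simpa using this
  have hWnonpos : ∀ u ≥ R, W u ≤ 0 := by
    intro a ha
    by_contra hcon
    push_neg at hcon
    have hev : ∀ᶠ ζ in atTop, W ζ < W a := hWlim.eventually_lt_const hcon
    obtain ⟨ζ, hζ1, hζ2⟩ := (hev.and (eventually_ge_atTop a)).exists
    exact absurd (hWmono (mem_Ici.mpr ha) (mem_Ici.mpr (le_trans ha hζ2)) hζ2)
      (not_le.mpr hζ1)
  -- integrability of q₁
  have hq₁integ : IntegrableOn q₁ (Ici R) := q1_integrable R q₁ hq₁cont hq₁ hq₁int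
  -- the tail integral G
  set G : ℝ → ℝ := fun u => ∫ s in Ioi u, q₁ s with hGdef
  have hGnonneg : ∀ u ≥ R, 0 ≤ G u := by
    intro u hu
    apply setIntegral_nonneg measurableSet_Ioi
    intro s hs
    exact hq₁ s (le_trans hu hs.le)
  have hGeq : ∀ u ≥ R, G u = (∫ s in Ioi R, q₁ s) - ∫ s in R..u, q₁ s := by
    intro u hu
    rw [intervalIntegral.integral_of_le hu]
    have hsplit : (∫ s in Ioi R, q₁ s)
        = (∫ s in Ioc R u, q₁ s) + ∫ s in Ioi u, q₁ s := by
      rw [← setIntegral_union (Set.Ioc_disjoint_Ioi le_rfl) measurableSet_Ioi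
        (hq₁integ.mono_set (fun x hx => le_of_lt hx.1))
        (hq₁integ.mono_set (fun x hx => le_trans hu (le_of_lt hx))),
        Set.Ioc_union_Ioi_eq_Ioi hu]
    simp only [hGdef]
    linarith
  have hGder : ∀ u > R, HasDerivAt G (-(q₁ u)) u := by
    intro u hu
    have hprim : HasDerivAt (fun v => ∫ s in R..v, q₁ s) (q₁ u) u := by
      apply intervalIntegral.integral_hasDerivAt_right
      · exact (hq₁cont.mono (by
          rw [uIcc_of_le hu.le]; exact Icc_subset_Ici_self)).intervalIntegrable
      · exact ⟨Ioi R, isOpen_Ioi.mem_nhds hu,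
          ((hq₁cont.mono (Ioi_subset_Ici le_rfl)).aestronglyMeasurable measurableSet_Ioi)⟩
      · exact hq₁cont.continuousAt (Ici_mem_nhds hu)
    have hev : G =ᶠ[nhds u] (fun v => (∫ s in Ioi R, q₁ s) - ∫ s in R..v, q₁ s) := by
      filter_upwards [isOpen_Ioi.eventually_mem hu] with v hv
      exact hGeq v (le_of_lt hv)
    have hder := (hasDerivAt_const u (∫ s in Ioi R, q₁ s)).sub hprim
    have h2 := hder.congr_of_eventuallyEq hev
    simpa using h2
  have hGcontOn : ∀ a b : ℝ, R < a → ContinuousOn G (Icc a b) := by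
    intro a b ha
    intro x hx
    exact ((hGder x (lt_of_lt_of_le ha hx.1)).continuousAt).continuousWithinAt
  -- bound on the Wronskian
  have hWbound : ∀ u > R, -W u ≤ ψ₀ u * ψ₁ u * G u := by
    intro u hu
    have hC : 0 ≤ ψ₀ u * ψ₁ u := mul_nonneg (hψ₀pos u hu.le).le (hψ₁pos u hu.le).le
    have key : ∀ b ≥ u, -W u ≤ ψ₀ u * ψ₁ u * G u - W b := by
      intro b hb
      have hcont1 : ContinuousOn (fun s => q₁ s * (ψ₀ s * ψ₁ s)) (uIcc u b) := by
        rw [uIcc_of_le hb]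
        exact (hq₁cont.mono (fun x hx => le_trans hu.le hx.1)).mul
          ((hd₀.continuous.continuousOn).mul (hd₁.continuous.continuousOn))
      have hFTC : W b - W u = ∫ s in u..b, q₁ s * (ψ₀ s * ψ₁ s) := by
        symm
        apply intervalIntegral.integral_eq_sub_of_hasDerivAt
        · intro x hx
          rw [uIcc_of_le hb] at hx
          exact hWder x (le_trans hu.le hx.1)
        · exact hcont1.intervalIntegrable
      have hint1 : IntervalIntegrable (fun s => q₁ s * (ψ₀ s * ψ₁ s)) volume u b :=
        hcont1.intervalIntegrable
      have hint2 : IntervalIntegrable (fun s => q₁ s * (ψ₀ u * ψ₁ u)) volume u b := by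
        apply ContinuousOn.intervalIntegrable
        rw [uIcc_of_le hb]
        exact (hq₁cont.mono (fun x hx => le_trans hu.le hx.1)).mul continuousOn_const
      have hmono2 : (∫ s in u..b, q₁ s * (ψ₀ s * ψ₁ s))
          ≤ ∫ s in u..b, q₁ s * (ψ₀ u * ψ₁ u) := by
        apply intervalIntegral.integral_mono_on hb hint1 hint2
        intro s hs
        have hsR : R ≤ s := le_trans hu.le hs.1
        have huR : u ∈ Ici R := mem_Ici.mpr hu.le
        have hsR' : s ∈ Ici R := mem_Ici.mpr hsR
        have hle : ψ₀ s * ψ₁ s ≤ ψ₀ u * ψ₁ u :=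
          mul_le_mul (hψ₀anti huR hsR' hs.1) (hψ₁anti huR hsR' hs.1)
            (hψ₁pos s hsR).le (hψ₀pos u hu.le).le
        exact mul_le_mul_of_nonneg_left hle (hq₁ s hsR)
      have heq : (∫ s in u..b, q₁ s * (ψ₀ u * ψ₁ u))
          = (∫ s in u..b, q₁ s) * (ψ₀ u * ψ₁ u) :=
        intervalIntegral.integral_mul_const _ _
      have hq1le : (∫ s in u..b, q₁ s) ≤ G u := by
        rw [intervalIntegral.integral_of_le hb]
        apply setIntegral_mono_set (hq₁integ.mono_set (fun x hx => le_trans hu.le hx.le))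
        · filter_upwards [ae_restrict_mem measurableSet_Ioi] with s hs
          exact hq₁ s (le_trans hu.le (le_of_lt hs))
        · exact (Set.Ioc_subset_Ioi_self).eventuallyLE
      have hfinal : (∫ s in u..b, q₁ s) * (ψ₀ u * ψ₁ u) ≤ G u * (ψ₀ u * ψ₁ u) :=
        mul_le_mul_of_nonneg_right hq1le hC
      have : W b - W u ≤ G u * (ψ₀ u * ψ₁ u) := by
        rw [hFTC]
        linarith
      linarith
    have htend : Tendsto (fun b => ψ₀ u * ψ₁ u * G u - W b) atTop
        (nhds (ψ₀ u * ψ₁ u * G u)) := by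
      simpa using (tendsto_const_nhds (x := ψ₀ u * ψ₁ u * G u)).sub hWlim
    exact ge_of_tendsto htend
      (by filter_upwards [eventually_ge_atTop u] with b hb using key b hb)
  -- the ratio r
  have hrder : ∀ u > R, HasDerivAt (fun ζ => ψ₁ ζ / ψ₀ ζ) (W u / (ψ₀ u)^2) u := by
    intro u hu
    have h := (hd₁.differentiableAt.hasDerivAt (x := u)).div
      (hd₀.differentiableAt.hasDerivAt) (ne_of_gt (hψ₀pos u hu.le))
    exact h
  have hrpos : ∀ u ≥ R, 0 < ψ₁ u / ψ₀ u := fun u hu =>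
    div_pos (hψ₁pos u hu) (hψ₀pos u hu)
  have hranti : AntitoneOn (fun ζ => ψ₁ ζ / ψ₀ ζ) (Ioi R) := by
    apply antitoneOn_of_deriv_nonpos (convex_Ioi R)
    · exact fun u hu => ((hrder u hu).continuousAt).continuousWithinAt
    · rw [interior_Ioi]
      exact fun u hu => (hrder u hu).differentiableAt.differentiableWithinAt
    · rw [interior_Ioi]
      intro u hu
      rw [(hrder u hu).deriv]
      exact div_nonpos_of_nonpos_of_nonneg (hWnonpos u hu.le) (sq_nonneg _)
  -- choose R'
  have htail := tail_tendsto R _ (hq₁int.mono_set Set.Ioi_subset_Ici_self)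
  have hevK : ∀ᶠ a in atTop, (∫ s in Ioi a, s * q₁ s) < 1/4 :=
    htail.eventually_lt_const (by norm_num)
  obtain ⟨R', hR'⟩ := (hevK.and ((eventually_gt_atTop R).and (eventually_ge_atTop 1))).exists
  obtain ⟨hK, hR'R, hR'1⟩ := hR'
  -- quantitative lower bound
  have hquant : ∀ ζ ≥ R', (ψ₁ R' / ψ₀ R') / 2 ≤ ψ₁ ζ / ψ₀ ζ := by
    intro ζ hζ
    have hrR' : 0 < ψ₁ R' / ψ₀ R' := hrpos R' hR'R.le
    have hGcc : ContinuousOn G (Icc R' ζ) := hGcontOn R' ζ hR'R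
    have hq₁cc : ContinuousOn q₁ (Icc R' ζ) :=
      hq₁cont.mono (fun x hx => le_trans hR'R.le hx.1)
    -- FTC for r
    have hFTCr : (ψ₁ ζ / ψ₀ ζ) - (ψ₁ R' / ψ₀ R') = ∫ u in R'..ζ, W u / (ψ₀ u)^2 := by
      symm
      apply intervalIntegral.integral_eq_sub_of_hasDerivAt
      · intro x hx
        rw [uIcc_of_le hζ] at hx
        exact hrder x (lt_of_lt_of_le hR'R hx.1)
      · apply ContinuousOn.intervalIntegrable
        rw [uIcc_of_le hζ]
        apply hWcont.continuousOn.div ((hd₀.continuous.continuousOn).pow 2)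
        intro x hx
        exact pow_ne_zero 2 (ne_of_gt (hψ₀pos x (le_trans hR'R.le hx.1)))
    -- pointwise lower bound for the derivative
    have hptwise : ∀ u ∈ Icc R' ζ, -((ψ₁ R' / ψ₀ R') * G u) ≤ W u / (ψ₀ u)^2 := by
      intro u hu
      have huR : R < u := lt_of_lt_of_le hR'R hu.1
      have hψ₀u : 0 < ψ₀ u := hψ₀pos u huR.le
      have hGu : 0 ≤ G u := hGnonneg u huR.le
      have h1 : -W u ≤ ψ₀ u * ψ₁ u * G u := hWbound u huR
      have h2 : -W u / (ψ₀ u)^2 ≤ (ψ₀ u * ψ₁ u * G u) / (ψ₀ u)^2 :=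
        div_le_div_of_nonneg_right h1 (by positivity) |>.trans_eq rfl
      have h3 : (ψ₀ u * ψ₁ u * G u) / (ψ₀ u)^2 = (ψ₁ u / ψ₀ u) * G u := by
        field_simp
      have h4 : (ψ₁ u / ψ₀ u) ≤ ψ₁ R' / ψ₀ R' :=
        hranti (mem_Ioi.mpr hR'R) (mem_Ioi.mpr huR) hu.1
      have h5 : (ψ₁ u / ψ₀ u) * G u ≤ (ψ₁ R' / ψ₀ R') * G u :=
        mul_le_mul_of_nonneg_right h4 hGu
      have h6 : -W u / (ψ₀ u)^2 ≤ (ψ₁ R' / ψ₀ R') * G u := by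
        rw [h3] at h2
        linarith
      have h7 : -W u / (ψ₀ u)^2 = -(W u / (ψ₀ u)^2) := by ring
      linarith [h7 ▸ h6]
    -- the G-integral bound via integration by parts
    have hGint : (∫ u in R'..ζ, G u) ≤ 1/2 := by
      have hφ : ∀ u ∈ uIcc R' ζ, HasDerivAt (fun v => (v - R') * G v)
          (G u - (u - R') * q₁ u) u := by
        intro u hu
        rw [uIcc_of_le hζ] at hu
        have huR : R < u := lt_of_lt_of_le hR'R hu.1
        have h1 : HasDerivAt (fun v : ℝ => v - R') 1 u := (hasDerivAt_id u).sub_const R'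
        have h2 := h1.mul (hGder u huR)
        exact h2.congr_deriv (by ring)
      have hintGq : IntervalIntegrable (fun u => G u - (u - R') * q₁ u) volume R' ζ := by
        apply ContinuousOn.intervalIntegrable
        rw [uIcc_of_le hζ]
        exact hGcc.sub (((continuous_id.sub continuous_const).continuousOn).mul hq₁cc)
      have hFTCφ : (∫ u in R'..ζ, (G u - (u - R') * q₁ u)) = (ζ - R') * G ζ := by
        have := intervalIntegral.integral_eq_sub_of_hasDerivAt hφ hintGq
        simpa using this
      have hintG : IntervalIntegrable G volume R' ζ := by
        apply ContinuousOn.intervalIntegrable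
        rw [uIcc_of_le hζ]
        exact hGcc
      have hintq : IntervalIntegrable (fun u => (u - R') * q₁ u) volume R' ζ := by
        apply ContinuousOn.intervalIntegrable
        rw [uIcc_of_le hζ]
        exact ((continuous_id.sub continuous_const).continuousOn).mul hq₁cc
      have hsplit : (∫ u in R'..ζ, G u)
          = (ζ - R') * G ζ + ∫ u in R'..ζ, (u - R') * q₁ u := by
        rw [← hFTCφ, intervalIntegral.integral_sub hintG hintq]
        ring
      -- bound term 2
      have hterm2 : (∫ u in R'..ζ, (u - R') * q₁ u) ≤ ∫ s in Ioi R', s * q₁ s := by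
        have hmono3 : (∫ u in R'..ζ, (u - R') * q₁ u) ≤ ∫ u in R'..ζ, u * q₁ u := by
          apply intervalIntegral.integral_mono_on hζ hintq
          · apply ContinuousOn.intervalIntegrable
            rw [uIcc_of_le hζ]
            exact (continuous_id.continuousOn).mul hq₁cc
          · intro u hu
            have huR : R ≤ u := le_trans hR'R.le hu.1
            have : (0:ℝ) < R' := lt_of_lt_of_le one_pos hR'1
            nlinarith [hq₁ u huR, hu.1]
        have hmono4 : (∫ u in R'..ζ, u * q₁ u) ≤ ∫ s in Ioi R', s * q₁ s := by
          rw [intervalIntegral.integral_of_le hζ]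
          apply setIntegral_mono_set
            (hq₁int.mono_set (fun x hx => le_trans hR'R.le hx.le))
          · filter_upwards [ae_restrict_mem measurableSet_Ioi] with s hs
            have hspos : (0:ℝ) < s := lt_of_lt_of_le (lt_of_lt_of_le one_pos hR'1) (le_of_lt hs)
            exact mul_nonneg hspos.le (hq₁ s (le_trans hR'R.le (le_of_lt hs)))
          · exact (Set.Ioc_subset_Ioi_self).eventuallyLE
        linarith
      -- bound term 1
      have hterm1 : (ζ - R') * G ζ ≤ ∫ s in Ioi R', s * q₁ s := by
        have hζR : R ≤ ζ := le_trans hR'R.le hζ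
        have h1 : (ζ - R') * G ζ = ∫ s in Ioi ζ, (ζ - R') * q₁ s := by
          rw [integral_const_mul]
        have h2 : (∫ s in Ioi ζ, (ζ - R') * q₁ s) ≤ ∫ s in Ioi ζ, s * q₁ s := by
          apply setIntegral_mono_on
          · exact (hq₁integ.mono_set (fun x hx => le_trans hζR hx.le)).const_mul _
          · exact hq₁int.mono_set (fun x hx => le_trans hζR hx.le)
          · exact measurableSet_Ioi
          · intro s hs
            have hsR : R ≤ s := le_trans hζR hs.le
            have hle : ζ - R' ≤ s := by
              have : (0:ℝ) < R' := lt_of_lt_of_le one_pos hR'1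
              have := hs
              simp only [mem_Ioi] at this
              linarith
            exact mul_le_mul_of_nonneg_right hle (hq₁ s hsR)
        have h3 : (∫ s in Ioi ζ, s * q₁ s) ≤ ∫ s in Ioi R', s * q₁ s := by
          apply setIntegral_mono_set
            (hq₁int.mono_set (fun x hx => le_trans hR'R.le hx.le))
          · filter_upwards [ae_restrict_mem measurableSet_Ioi] with s hs
            have hspos : (0:ℝ) < s := lt_of_lt_of_le (lt_of_lt_of_le one_pos hR'1) (le_of_lt hs)
            exact mul_nonneg hspos.le (hq₁ s (le_trans hR'R.le (le_of_lt hs)))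
          · exact (Set.Ioi_subset_Ioi hζ).eventuallyLE
        linarith
      rw [hsplit]
      linarith
    -- combine
    have hintmono : (∫ u in R'..ζ, -((ψ₁ R' / ψ₀ R') * G u)) ≤ ∫ u in R'..ζ, W u / (ψ₀ u)^2 := by
      apply intervalIntegral.integral_mono_on hζ
      · apply ContinuousOn.intervalIntegrable
        rw [uIcc_of_le hζ]
        exact (hGcc.const_smul (ψ₁ R' / ψ₀ R')).neg
      · apply ContinuousOn.intervalIntegrable
        rw [uIcc_of_le hζ]
        apply hWcont.continuousOn.div ((hd₀.continuous.continuousOn).pow 2)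
        intro x hx
        exact pow_ne_zero 2 (ne_of_gt (hψ₀pos x (le_trans hR'R.le hx.1)))
      · exact hptwise
    have hconstint : (∫ u in R'..ζ, -((ψ₁ R' / ψ₀ R') * G u))
        = -((ψ₁ R' / ψ₀ R') * ∫ u in R'..ζ, G u) := by
      rw [intervalIntegral.integral_neg, intervalIntegral.integral_const_mul]
    have hlow : -((ψ₁ R' / ψ₀ R') * ∫ u in R'..ζ, G u) ≥ -((ψ₁ R' / ψ₀ R') * (1/2)) := by
      have := mul_le_mul_of_nonneg_left hGint hrR'.le
      linarith
    have := hFTCr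
    rw [← hconstint] at hlow
    linarith [hintmono, hlow, hFTCr]
  -- conclusion
  set f : ℝ → ℝ := fun ζ => ψ₁ (max ζ R') / ψ₀ (max ζ R') with hfdef
  have hanti2 : Antitone f := by
    intro a b hab
    exact hranti (mem_Ioi.mpr (lt_of_lt_of_le hR'R (le_max_right a R')))
      (mem_Ioi.mpr (lt_of_lt_of_le hR'R (le_max_right b R')))
      (max_le_max hab le_rfl)
  have hbdd : BddBelow (Set.range f) := by
    refine ⟨0, ?_⟩
    rintro x ⟨ζ, rfl⟩
    exact (hrpos (max ζ R') (le_trans hR'R.le (le_max_right ζ R'))).le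
  have hlim2 : Tendsto f atTop (nhds (⨅ ζ, f ζ)) := tendsto_atTop_ciInf hanti2 hbdd
  have hc : (ψ₁ R' / ψ₀ R') / 2 ≤ ⨅ ζ, f ζ :=
    le_ciInf (fun ζ => hquant (max ζ R') (le_max_right ζ R'))
  refine ⟨⨅ ζ, f ζ, lt_of_lt_of_le (by have := hrpos R' hR'R.le; linarith) hc, ?_⟩
  · apply hlim2.congr'
    filter_upwards [eventually_ge_atTop R'] with ζ hζ
    simp only [hfdef, max_eq_left hζ]
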